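/- (First uniqueness theorem) Let A be a commutative noetherian ring and M a finitely generated A-module. Suppose N₁, ..., N_t are submodules of M with N₁ ∩ ... ∩ N_t = 0, each quotient M/N_i is primary with set of associated primes equal to the singleton {p_i}, the primes p₁, ..., p_t are pairwise distinct, and the decomposition is irredundant (for each i, the intersection of the N_j for j ≠ i is not contained in N_i, i.e. is nonzero when intersected suitably: ∩_{j≠i} N_j ≠ 0). Then the set of associated primes of M equals {p₁, ..., p_t}. -/

import Mathlib

/-- An `A`-module `Q` is primary if every zero divisor of `Q` lies in the radical of
the annihilator of `Q`. -/
def IsPrimaryModule (A : Type*) [CommRing A] (Q : Type*) [AddCommGroup Q] [Module A Q] : Prop :=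
  ∀ (a : A) (x : Q), a • x = 0 → x ≠ 0 → a ∈ (Module.annihilator A Q).radical

/-- (First uniqueness theorem) Over a commutative noetherian ring, if
`N₁ ∩ … ∩ N_t = 0` is an irredundant decomposition of `0` in a finitely generated
module `M`, where each `M ⧸ Nᵢ` is primary with single associated prime `pᵢ` and the
`pᵢ` are pairwise distinct, then `ass(M) = {p₁, …, p_t}`. -/
theorem associatedPrimes_eq_of_primary_decomposition
    {A : Type*} [CommRing A] [IsNoetherianRing A]
    {M : Type*} [AddCommGroup M] [Module A M] [Module.Finite A M]
    (t : ℕ) (N : Fin t → Submodule A M) (p : Fin t → Ideal A)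
    (hinf : (⨅ i, N i) = ⊥)
    (hprim : ∀ i, IsPrimaryModule A (M ⧸ N i))
    (hass : ∀ i, associatedPrimes A (M ⧸ N i) = {p i})
    (hdist : Function.Injective p)
    (hirred : ∀ i, (⨅ j ∈ ({i}ᶜ : Set (Fin t)), N j) ≠ ⊥) :
    associatedPrimes A M = Set.range p := by
  ext P
  simp only [Set.mem_range]
  constructor
  · -- forward inclusion
    intro hPa
    obtain ⟨hP, x, rfl⟩ := isAssociatedPrime_iff.mp hPa
    rw [Submodule.bot_colon'] at hP ⊢
    set I : Fin t → Ideal A := fun i => (A ∙ (N i).mkQ x).annihilator with hI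
    have key : ∀ a : A, a • x = 0 ↔ ∀ i, a ∈ I i := by
      intro a
      rw [← Submodule.mem_bot A, ← hinf, Submodule.mem_iInf]
      refine forall_congr' fun i => ?_
      rw [hI, Submodule.mem_annihilator_span_singleton, ← map_smul,
        Submodule.mkQ_apply, Submodule.Quotient.mk_eq_zero]
    have hPI : (A ∙ x).annihilator = ⨅ i, I i := by
      ext a
      rw [Submodule.mem_annihilator_span_singleton, Submodule.mem_iInf]
      exact key a
    have hle : ∃ i, I i ≤ (A ∙ x).annihilator := by
      have := (hP.inf_le' (s := Finset.univ) (f := I)).mp ?_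
      · obtain ⟨i, _, hi⟩ := this
        exact ⟨i, hi⟩
      · rw [Finset.inf_eq_iInf, hPI]
        exact le_iInf fun j => iInf₂_le j (Finset.mem_univ j)
    obtain ⟨i, hi⟩ := hle
    have heq : (A ∙ x).annihilator = I i := by
      refine le_antisymm ?_ hi
      intro a ha
      rw [Submodule.mem_annihilator_span_singleton] at ha
      exact (key a).mp ha i
    have hx' : (N i).mkQ x ≠ 0 := by
      intro h
      apply hP.ne_top
      rw [heq, hI]
      simp [h, Submodule.span_singleton_eq_bot.mpr, Submodule.annihilator_bot]
    have : (A ∙ x).annihilator ∈ associatedPrimes A (M ⧸ N i) :=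
      isAssociatedPrime_iff.mpr ⟨hP, ⟨(N i).mkQ x, by rw [Submodule.bot_colon']; exact heq⟩⟩
    rw [hass i] at this
    exact ⟨i, this.symm⟩
  · -- reverse inclusion
    rintro ⟨i, rfl⟩
    set L := ⨅ j ∈ ({i}ᶜ : Set (Fin t)), N j with hL
    have hLN : L ⊓ N i = ⊥ := by
      rw [← hinf]
      refine le_antisymm (le_iInf fun j => ?_) (le_inf ?_ (iInf_le _ i))
      · by_cases h : j = i
        · subst h; exact inf_le_right
        · exact inf_le_left.trans (iInf₂_le j (by simpa using h))
      · exact le_iInf₂ fun j _ => iInf_le _ j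
    haveI : Nontrivial L := Submodule.nontrivial_iff_ne_bot.mpr (hirred i)
    obtain ⟨P, hP⟩ := associatedPrimes.nonempty A L
    -- map P into the quotient M ⧸ N i
    have hinj : Function.Injective ((N i).mkQ.comp L.subtype) := by
      rw [← LinearMap.ker_eq_bot, LinearMap.ker_comp, Submodule.ker_mkQ]
      rw [Submodule.eq_bot_iff]
      rintro ⟨x, hx⟩ hmem
      have : x ∈ L ⊓ N i := ⟨hx, by simpa using hmem⟩
      rw [hLN] at this
      simpa using this
    have hPQ : P ∈ associatedPrimes A (M ⧸ N i) :=
      hP.map_of_injective _ hinj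
    rw [hass i] at hPQ
    have hPM : P ∈ associatedPrimes A M :=
      hP.map_of_injective L.subtype Subtype.coe_injective
    rwa [← hPQ]
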